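/- arXiv:1207.4733 — 2 statements merged into one kernel-verified Lean document; each statement's English description precedes it below -/
import Mathlib

section
/- For every ε ∈ (0, 1/√n) and every integer T satisfying both T ≥ 4·t_mix(ε/2)⁴/ε³ + 4·t_mix(ε/2)²/ε² + 1/ε and √(ε/T) − 1/T ≤ ε(1 − √n·ε)/(4 n^{3/2} t_mix(ε/2)), one has ‖π₀ P_{1/T} P_{2/T} ⋯ P_{k/T} − π_{k/T}‖_TV ≤ ε for every integer k with 1 ≤ k ≤ T. -/
open Matrix BigOperators

/-- A row-stochastic matrix: nonnegative entries, each row sums to 1. -/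
def IsStochastic {n : ℕ} (P : Matrix (Fin n) (Fin n) ℝ) : Prop :=
  (∀ i j, 0 ≤ P i j) ∧ ∀ i, ∑ j, P i j = 1

/-- Irreducibility: every state can reach every other state. -/
def MCIrreducible {n : ℕ} (P : Matrix (Fin n) (Fin n) ℝ) : Prop :=
  ∀ i j, ∃ m : ℕ, 0 < (P ^ m) i j

/-- Aperiodicity (for a finite chain): every state has eventually positive return
probabilities. -/
def MCAperiodic {n : ℕ} (P : Matrix (Fin n) (Fin n) ℝ) : Prop :=
  ∀ i : Fin n, ∃ N : ℕ, ∀ m : ℕ, N ≤ m → 0 < (P ^ m) i i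

/-- A probability (row) vector. -/
def IsProbVec {n : ℕ} (v : Fin n → ℝ) : Prop :=
  (∀ i, 0 ≤ v i) ∧ ∑ i, v i = 1

/-- Total variation distance between two vectors. -/
noncomputable def tvDist {n : ℕ} (μ ν : Fin n → ℝ) : ℝ :=
  (1 / 2) * ∑ i, |μ i - ν i|

/-- Euclidean norm on ℝⁿ. -/
noncomputable def euclNorm {n : ℕ} (v : Fin n → ℝ) : ℝ :=
  Real.sqrt (∑ i, (v i) ^ 2)

/-- Mixing time of `P` with stationary distribution `π`. -/
noncomputable def mixingTime {n : ℕ} (P : Matrix (Fin n) (Fin n) ℝ)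
    (π : Fin n → ℝ) (ε : ℝ) : ℕ :=
  sInf {T : ℕ | ∀ ν : Fin n → ℝ, IsProbVec ν → tvDist (ν ᵥ* (P ^ T)) π ≤ ε}

/-- The interpolation `P_t = (1-t)·P₀ + t·P₁`. -/
noncomputable def Pt {n : ℕ} (P₀ P₁ : Matrix (Fin n) (Fin n) ℝ) (t : ℝ) :
    Matrix (Fin n) (Fin n) ℝ :=
  (1 - t) • P₀ + t • P₁

/-- The ordered product `P_{(j+1)/T} P_{(j+2)/T} ⋯ P_{k/T}` (identity if `j ≥ k`). -/
noncomputable def prodSeg {n : ℕ} (P₀ P₁ : Matrix (Fin n) (Fin n) ℝ) (T j k : ℕ) :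
    Matrix (Fin n) (Fin n) ℝ :=
  ((List.range (k - j)).map (fun i => Pt P₀ P₁ (((j : ℝ) + (i : ℝ) + 1) / (T : ℝ)))).prod

/-- The ordered product `P_{1/T} P_{2/T} ⋯ P_{k/T}`. -/
noncomputable def adiabProd {n : ℕ} (P₀ P₁ : Matrix (Fin n) (Fin n) ℝ) (T k : ℕ) :
    Matrix (Fin n) (Fin n) ℝ :=
  prodSeg P₀ P₁ T 0 k

/-- Adiabatic time of the adiabatic evolution between `P₀` and `P₁`,
with `π₁` the stationary distribution of `P₁`. -/
noncomputable def adiabaticTime {n : ℕ} (P₀ P₁ : Matrix (Fin n) (Fin n) ℝ)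
    (π₁ : Fin n → ℝ) (ε : ℝ) : ℕ :=
  sInf {T' : ℕ | ∀ T : ℕ, T' ≤ T → ∀ ν : Fin n → ℝ, IsProbVec ν →
    tvDist ((ν ᵥ* P₀) ᵥ* adiabProd P₀ P₁ T T) π₁ ≤ ε}

/-- Stable adiabatic time, where `π s` is the stationary distribution of `P_s`. -/
noncomputable def stableAdiabaticTime {n : ℕ} (P₀ P₁ : Matrix (Fin n) (Fin n) ℝ)
    (π : ℝ → Fin n → ℝ) (ε : ℝ) : ℕ :=
  sInf {T : ℕ | ∀ k : ℕ, 1 ≤ k → k ≤ T →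
    tvDist ((π 0) ᵥ* adiabProd P₀ P₁ T k) (π ((k : ℝ) / (T : ℝ))) < ε}

/-- `t_mix(ε) = sup_{s ∈ [0,1]} t_mix(P_s, ε)`, where `π s` is the stationary
distribution of `P_s`. -/
noncomputable def maxMixingTime {n : ℕ} (P₀ P₁ : Matrix (Fin n) (Fin n) ℝ)
    (π : ℝ → Fin n → ℝ) (ε : ℝ) : ℕ :=
  sSup {m : ℕ | ∃ s ∈ Set.Icc (0 : ℝ) 1, m = mixingTime (Pt P₀ P₁ s) (π s) ε}

/-- `s` is a singular value of `A`: `s ≥ 0` and `s²` is an eigenvalue of `A Aᵀ`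
(for a left eigenvector). -/
def IsSingularValue {n : ℕ} (A : Matrix (Fin n) (Fin n) ℝ) (s : ℝ) : Prop :=
  0 ≤ s ∧ ∃ v : Fin n → ℝ, v ≠ 0 ∧ v ᵥ* (A * Aᵀ) = (s ^ 2) • v

/-- `σ` is the smallest nonzero (positive) singular value of `A`. -/
def IsSmallestPosSingularValue {n : ℕ} (A : Matrix (Fin n) (Fin n) ℝ) (σ : ℝ) : Prop :=
  0 < σ ∧ IsSingularValue A σ ∧ ∀ s : ℝ, 0 < s → IsSingularValue A s → σ ≤ s

section Aux
open Matrix BigOperators Finset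
variable {n : ℕ}

lemma aux_vecMul_apply (v : Fin n → ℝ) (M : Matrix (Fin n) (Fin n) ℝ) (j : Fin n) :
    (v ᵥ* M) j = ∑ i, v i * M i j := by
  simp [Matrix.vecMul, dotProduct]

lemma aux_stoch_one : IsStochastic (1 : Matrix (Fin n) (Fin n) ℝ) := by
  constructor
  · intro i j
    by_cases h : i = j <;> simp [Matrix.one_apply, h]
  · intro i
    simp [Matrix.one_apply]

lemma aux_stoch_mul {A B : Matrix (Fin n) (Fin n) ℝ}
    (hA : IsStochastic A) (hB : IsStochastic B) : IsStochastic (A * B) := by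
  constructor
  · intro i j
    rw [Matrix.mul_apply]
    exact Finset.sum_nonneg fun l _ => mul_nonneg (hA.1 i l) (hB.1 l j)
  · intro i
    simp only [Matrix.mul_apply]
    rw [Finset.sum_comm]
    simp_rw [← Finset.mul_sum]
    simp only [hB.2, mul_one]
    exact hA.2 i

lemma aux_stoch_pow {A : Matrix (Fin n) (Fin n) ℝ} (hA : IsStochastic A) (m : ℕ) :
    IsStochastic (A ^ m) := by
  induction m with
  | zero => simpa using aux_stoch_one
  | succ m ih => rw [pow_succ]; exact aux_stoch_mul ih hA

lemma aux_stoch_prod : ∀ (L : List (Matrix (Fin n) (Fin n) ℝ)),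
    (∀ A ∈ L, IsStochastic A) → IsStochastic L.prod := by
  intro L
  induction L with
  | nil => intro _; simpa using aux_stoch_one
  | cons A L ih =>
    intro h
    rw [List.prod_cons]
    exact aux_stoch_mul (h A (List.mem_cons_self))
      (ih fun B hB => h B (List.mem_cons_of_mem _ hB))

lemma aux_prob_vecMul {v : Fin n → ℝ} {A : Matrix (Fin n) (Fin n) ℝ}
    (hv : IsProbVec v) (hA : IsStochastic A) : IsProbVec (v ᵥ* A) := by
  constructor
  · intro j
    rw [aux_vecMul_apply]
    exact Finset.sum_nonneg fun i _ => mul_nonneg (hv.1 i) (hA.1 i j)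
  · simp_rw [aux_vecMul_apply]
    rw [Finset.sum_comm]
    simp_rw [← Finset.mul_sum]
    simp only [hA.2, mul_one]
    exact hv.2

lemma aux_tv_tri (μ ρ ν : Fin n → ℝ) : tvDist μ ν ≤ tvDist μ ρ + tvDist ρ ν := by
  unfold tvDist
  have h : ∑ i, |μ i - ν i| ≤ ∑ i, (|μ i - ρ i| + |ρ i - ν i|) :=
    Finset.sum_le_sum fun i _ => abs_sub_le _ _ _
  rw [Finset.sum_add_distrib] at h
  linarith

lemma aux_tv_le_one {μ ν : Fin n → ℝ} (hμ : IsProbVec μ) (hν : IsProbVec ν) :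
    tvDist μ ν ≤ 1 := by
  unfold tvDist
  have h : ∑ i, |μ i - ν i| ≤ ∑ i, (μ i + ν i) := by
    refine Finset.sum_le_sum fun i _ => ?_
    have := abs_sub (μ i) (ν i)
    calc |μ i - ν i| ≤ |μ i| + |ν i| := abs_sub _ _
      _ = μ i + ν i := by rw [abs_of_nonneg (hμ.1 i), abs_of_nonneg (hν.1 i)]
  rw [Finset.sum_add_distrib, hμ.2, hν.2] at h
  linarith

lemma aux_l1_contr (x : Fin n → ℝ) {A : Matrix (Fin n) (Fin n) ℝ} (hA : IsStochastic A) :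
    ∑ j, |(x ᵥ* A) j| ≤ ∑ i, |x i| := by
  calc ∑ j, |(x ᵥ* A) j| = ∑ j, |∑ i, x i * A i j| := by simp_rw [aux_vecMul_apply]
    _ ≤ ∑ j, ∑ i, |x i * A i j| :=
        Finset.sum_le_sum fun j _ => Finset.abs_sum_le_sum_abs _ _
    _ = ∑ i, ∑ j, |x i| * A i j := by
        rw [Finset.sum_comm]
        exact Finset.sum_congr rfl fun i _ => Finset.sum_congr rfl fun j _ => by
          rw [abs_mul, abs_of_nonneg (hA.1 i j)]
    _ = ∑ i, |x i| := by
        simp_rw [← Finset.mul_sum]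
        simp [hA.2]

lemma aux_tv_contr {μ ν : Fin n → ℝ} {A : Matrix (Fin n) (Fin n) ℝ} (hA : IsStochastic A) :
    tvDist (μ ᵥ* A) (ν ᵥ* A) ≤ tvDist μ ν := by
  unfold tvDist
  have key : ∀ j, (μ ᵥ* A) j - (ν ᵥ* A) j = ((μ - ν) ᵥ* A) j := by
    intro j
    simp_rw [aux_vecMul_apply]
    rw [← Finset.sum_sub_distrib]
    exact Finset.sum_congr rfl fun i _ => by simp [sub_mul]
  simp_rw [key]
  have h := aux_l1_contr (μ - ν) hA
  have h2 : ∑ i, |(μ - ν) i| = ∑ i, |μ i - ν i| := rfl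
  rw [h2] at h
  linarith

lemma aux_tv_perturb {μ : Fin n → ℝ} (hμ : IsProbVec μ)
    {A B : Matrix (Fin n) (Fin n) ℝ} {c : ℝ}
    (hrow : ∀ i, ∑ j, |A i j - B i j| ≤ c) :
    tvDist (μ ᵥ* A) (μ ᵥ* B) ≤ c / 2 := by
  unfold tvDist
  have h1 : ∑ j, |(μ ᵥ* A) j - (μ ᵥ* B) j| ≤ c := by
    calc ∑ j, |(μ ᵥ* A) j - (μ ᵥ* B) j| = ∑ j, |∑ i, μ i * (A i j - B i j)| := by
          refine Finset.sum_congr rfl fun j _ => ?_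
          simp_rw [aux_vecMul_apply]
          rw [← Finset.sum_sub_distrib]
          congr 1
          exact Finset.sum_congr rfl fun i _ => by ring
      _ ≤ ∑ j, ∑ i, |μ i * (A i j - B i j)| :=
          Finset.sum_le_sum fun j _ => Finset.abs_sum_le_sum_abs _ _
      _ = ∑ i, ∑ j, μ i * |A i j - B i j| := by
          rw [Finset.sum_comm]
          exact Finset.sum_congr rfl fun i _ => Finset.sum_congr rfl fun j _ => by
            rw [abs_mul, abs_of_nonneg (hμ.1 i)]
      _ = ∑ i, μ i * ∑ j, |A i j - B i j| := by simp_rw [Finset.mul_sum]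
      _ ≤ ∑ i, μ i * c := Finset.sum_le_sum fun i _ =>
            mul_le_mul_of_nonneg_left (hrow i) (hμ.1 i)
      _ = c := by rw [← Finset.sum_mul, hμ.2, one_mul]
  linarith

end Aux

section Aux2
open Matrix BigOperators Finset
variable {n : ℕ}

lemma aux_doeblin (hn : 0 < n) {Q : Matrix (Fin n) (Fin n) ℝ} (hQ : IsStochastic Q)
    {δ : ℝ} (hδ : ∀ i j, δ ≤ Q i j) {μ ν : Fin n → ℝ}
    (hμ : IsProbVec μ) (hν : IsProbVec ν) :
    tvDist (μ ᵥ* Q) (ν ᵥ* Q) ≤ (1 - n * δ) * tvDist μ ν := by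
  have hsum0 : ∑ i, (μ i - ν i) = 0 := by
    rw [Finset.sum_sub_distrib, hμ.2, hν.2]; ring
  have key : ∀ j, (μ ᵥ* Q) j - (ν ᵥ* Q) j = ∑ i, (μ i - ν i) * (Q i j - δ) := by
    intro j
    have expand : ∀ i : Fin n,
        (μ i - ν i) * (Q i j - δ) = (μ i * Q i j - ν i * Q i j) - (μ i - ν i) * δ := by
      intro i; ring
    rw [Finset.sum_congr rfl fun i _ => expand i, Finset.sum_sub_distrib,
      Finset.sum_sub_distrib, ← Finset.sum_mul, hsum0, zero_mul, sub_zero,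
      aux_vecMul_apply, aux_vecMul_apply]
  have hQδ : ∀ i j, 0 ≤ Q i j - δ := fun i j => sub_nonneg.2 (hδ i j)
  have hrow : ∀ i, ∑ j, (Q i j - δ) = 1 - n * δ := by
    intro i
    rw [Finset.sum_sub_distrib, hQ.2 i, Finset.sum_const, Finset.card_univ]
    simp [nsmul_eq_mul]
  unfold tvDist
  have h1 : ∑ j, |(μ ᵥ* Q) j - (ν ᵥ* Q) j| ≤ (1 - n * δ) * ∑ i, |μ i - ν i| := by
    calc ∑ j, |(μ ᵥ* Q) j - (ν ᵥ* Q) j| = ∑ j, |∑ i, (μ i - ν i) * (Q i j - δ)| := by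
          exact Finset.sum_congr rfl fun j _ => by rw [key j]
      _ ≤ ∑ j, ∑ i, |(μ i - ν i) * (Q i j - δ)| :=
          Finset.sum_le_sum fun j _ => Finset.abs_sum_le_sum_abs _ _
      _ = ∑ i, ∑ j, |μ i - ν i| * (Q i j - δ) := by
          rw [Finset.sum_comm]
          exact Finset.sum_congr rfl fun i _ => Finset.sum_congr rfl fun j _ => by
            rw [abs_mul, abs_of_nonneg (hQδ i j)]
      _ = ∑ i, |μ i - ν i| * (1 - n * δ) := by
          exact Finset.sum_congr rfl fun i _ => by rw [← Finset.mul_sum, hrow i]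
      _ = (1 - n * δ) * ∑ i, |μ i - ν i| := by rw [← Finset.sum_mul]; ring
  linarith

lemma aux_stat_pow {P : Matrix (Fin n) (Fin n) ℝ} {p : Fin n → ℝ}
    (hstat : p ᵥ* P = p) (m : ℕ) : p ᵥ* (P ^ m) = p := by
  induction m with
  | zero => simp
  | succ m ih => rw [pow_succ, ← Matrix.vecMul_vecMul, ih, hstat]

lemma aux_one_sub_nδ_nonneg (hn : 0 < n) {Q : Matrix (Fin n) (Fin n) ℝ}
    (hQ : IsStochastic Q) {δ : ℝ} (hδ : ∀ i j, δ ≤ Q i j) : 0 ≤ 1 - (n : ℝ) * δ := by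
  have i0 : Fin n := ⟨0, hn⟩
  have h1 : ∑ j, δ ≤ ∑ j, Q i0 j := Finset.sum_le_sum fun j _ => hδ i0 j
  rw [hQ.2 i0, Finset.sum_const, Finset.card_univ] at h1
  simp only [Fintype.card_fin, nsmul_eq_mul] at h1
  linarith

lemma aux_mix_block (hn : 0 < n) {P : Matrix (Fin n) (Fin n) ℝ} (hP : IsStochastic P)
    {p : Fin n → ℝ} (hp : IsProbVec p) (hstat : p ᵥ* P = p)
    {N : ℕ} {δ : ℝ} (hδ : ∀ i j, δ ≤ (P ^ N) i j) (q : ℕ) :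
    ∀ ν : Fin n → ℝ, IsProbVec ν → tvDist (ν ᵥ* P ^ (N * q)) p ≤ (1 - n * δ) ^ q := by
  have hQ : IsStochastic (P ^ N) := aux_stoch_pow hP N
  have hfac : 0 ≤ 1 - (n : ℝ) * δ := aux_one_sub_nδ_nonneg hn hQ hδ
  induction q with
  | zero =>
    intro ν hν
    simpa using aux_tv_le_one hν hp
  | succ q ih =>
    intro ν hν
    have hsplit : P ^ (N * (q + 1)) = P ^ (N * q) * P ^ N := by
      rw [← pow_add]; ring_nf
    rw [hsplit, ← Matrix.vecMul_vecMul]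
    have hνq : IsProbVec (ν ᵥ* P ^ (N * q)) := aux_prob_vecMul hν (aux_stoch_pow hP _)
    have h1 := aux_doeblin hn hQ hδ hνq hp
    rw [aux_stat_pow hstat N] at h1
    have h2 := ih ν hν
    calc tvDist ((ν ᵥ* P ^ (N * q)) ᵥ* P ^ N) p ≤ (1 - n * δ) * tvDist (ν ᵥ* P ^ (N * q)) p := h1
      _ ≤ (1 - n * δ) * (1 - n * δ) ^ q := mul_le_mul_of_nonneg_left h2 hfac
      _ = (1 - n * δ) ^ (q + 1) := by rw [pow_succ]; ring

lemma aux_pow_entry_nonneg {B : Matrix (Fin n) (Fin n) ℝ} (hB : ∀ i j, 0 ≤ B i j) (N : ℕ) :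
    ∀ i j, 0 ≤ (B ^ N) i j := by
  induction N with
  | zero =>
    intro i j
    by_cases h : i = j <;> simp [Matrix.one_apply, h]
  | succ N ih =>
    intro i j
    rw [pow_succ, Matrix.mul_apply]
    exact Finset.sum_nonneg fun l _ => mul_nonneg (ih i l) (hB l j)

lemma aux_pow_entry_mono {A B : Matrix (Fin n) (Fin n) ℝ} {c : ℝ} (hc : 0 ≤ c)
    (hB : ∀ i j, 0 ≤ B i j) (h : ∀ i j, c * B i j ≤ A i j) (N : ℕ) :
    ∀ i j, c ^ N * (B ^ N) i j ≤ (A ^ N) i j := by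
  induction N with
  | zero => intro i j; simp
  | succ N ih =>
    intro i j
    simp only [pow_succ, Matrix.mul_apply, Finset.mul_sum]
    refine Finset.sum_le_sum fun l _ => ?_
    have e : c ^ N * c * ((B ^ N) i l * B l j) = (c ^ N * (B ^ N) i l) * (c * B l j) := by ring
    rw [e]
    have hAN : (0 : ℝ) ≤ (A ^ N) i l :=
      le_trans (mul_nonneg (pow_nonneg hc N) (aux_pow_entry_nonneg hB N i l)) (ih i l)
    exact mul_le_mul (ih i l) (h l j) (mul_nonneg hc (hB l j)) hAN

lemma aux_pow_entry_lower {P : Matrix (Fin n) (Fin n) ℝ} (hP : IsStochastic P)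
    (a b : ℕ) (i l j : Fin n) : (P ^ a) i l * (P ^ b) l j ≤ (P ^ (a + b)) i j := by
  rw [pow_add, Matrix.mul_apply]
  refine Finset.single_le_sum (f := fun l' => (P ^ a) i l' * (P ^ b) l' j) ?_ (Finset.mem_univ l)
  intro l' _
  exact mul_nonneg ((aux_stoch_pow hP a).1 i l') ((aux_stoch_pow hP b).1 l' j)

lemma aux_primitive {P : Matrix (Fin n) (Fin n) ℝ} (hP : IsStochastic P)
    (hi : MCIrreducible P) (ha : MCAperiodic P) : ∃ N : ℕ, ∀ i j, 0 < (P ^ N) i j := by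
  choose Na hNa using ha
  choose m hm using hi
  refine ⟨Finset.univ.sup (fun p : Fin n × Fin n => Na p.1 + m p.1 p.2), ?_⟩
  intro i j
  set N := Finset.univ.sup (fun p : Fin n × Fin n => Na p.1 + m p.1 p.2) with hN
  have h1 : Na i + m i j ≤ N := Finset.le_sup (f := fun p : Fin n × Fin n => Na p.1 + m p.1 p.2) (Finset.mem_univ (i, j))
  have h2 : N = (N - m i j) + m i j := by omega
  rw [h2]
  have hii : 0 < (P ^ (N - m i j)) i i := hNa i _ (by omega)
  calc (0 : ℝ) < (P ^ (N - m i j)) i i * (P ^ (m i j)) i j := mul_pos hii (hm i j)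
    _ ≤ (P ^ ((N - m i j) + m i j)) i j := aux_pow_entry_lower hP _ _ i i j

end Aux2

section Aux3
open Matrix BigOperators Finset
variable {n : ℕ}

lemma aux_Pt_apply (P₀ P₁ : Matrix (Fin n) (Fin n) ℝ) (t : ℝ) (i j : Fin n) :
    Pt P₀ P₁ t i j = (1 - t) * P₀ i j + t * P₁ i j := by
  simp [Pt, Matrix.add_apply, Matrix.smul_apply, smul_eq_mul]

lemma aux_Pt_zero (P₀ P₁ : Matrix (Fin n) (Fin n) ℝ) : Pt P₀ P₁ 0 = P₀ := by
  simp [Pt]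

lemma aux_Pt_stoch {P₀ P₁ : Matrix (Fin n) (Fin n) ℝ} (hP₀ : IsStochastic P₀)
    (hP₁ : IsStochastic P₁) {t : ℝ} (ht : t ∈ Set.Icc (0 : ℝ) 1) :
    IsStochastic (Pt P₀ P₁ t) := by
  constructor
  · intro i j
    rw [aux_Pt_apply]
    have h1 := hP₀.1 i j
    have h2 := hP₁.1 i j
    nlinarith [ht.1, ht.2]
  · intro i
    simp_rw [aux_Pt_apply]
    rw [Finset.sum_add_distrib, ← Finset.mul_sum, ← Finset.mul_sum, hP₀.2 i, hP₁.2 i]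
    ring

lemma aux_Pt_row_diff {P₀ P₁ : Matrix (Fin n) (Fin n) ℝ} (hP₀ : IsStochastic P₀)
    (hP₁ : IsStochastic P₁) (a b : ℝ) (i : Fin n) :
    ∑ j, |Pt P₀ P₁ a i j - Pt P₀ P₁ b i j| ≤ 2 * |a - b| := by
  have key : ∀ j, |Pt P₀ P₁ a i j - Pt P₀ P₁ b i j| ≤ |a - b| * (P₀ i j + P₁ i j) := by
    intro j
    rw [aux_Pt_apply, aux_Pt_apply]
    have e : (1 - a) * P₀ i j + a * P₁ i j - ((1 - b) * P₀ i j + b * P₁ i j)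
        = (a - b) * (P₁ i j - P₀ i j) := by ring
    rw [e, abs_mul]
    refine mul_le_mul_of_nonneg_left ?_ (abs_nonneg _)
    calc |P₁ i j - P₀ i j| ≤ |P₁ i j| + |P₀ i j| := abs_sub _ _
      _ = P₀ i j + P₁ i j := by
          rw [abs_of_nonneg (hP₁.1 i j), abs_of_nonneg (hP₀.1 i j)]; ring
  calc ∑ j, |Pt P₀ P₁ a i j - Pt P₀ P₁ b i j| ≤ ∑ j, |a - b| * (P₀ i j + P₁ i j) :=
        Finset.sum_le_sum fun j _ => key j
    _ = |a - b| * (∑ j, P₀ i j + ∑ j, P₁ i j) := by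
        rw [← Finset.mul_sum, Finset.sum_add_distrib]
    _ = 2 * |a - b| := by rw [hP₀.2 i, hP₁.2 i]; ring

/-- Telescoping comparison between a product of stochastic matrices and a power. -/
lemma aux_tele {c : ℝ} :
    ∀ (L : List (Matrix (Fin n) (Fin n) ℝ)) (B : Matrix (Fin n) (Fin n) ℝ),
    (∀ A ∈ L, IsStochastic A) → IsStochastic B →
    (∀ A ∈ L, ∀ i, ∑ j, |A i j - B i j| ≤ c) →
    ∀ μ : Fin n → ℝ, IsProbVec μ →
    tvDist (μ ᵥ* L.prod) (μ ᵥ* B ^ L.length) ≤ (L.length : ℝ) * c / 2 := by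
  intro L
  induction L with
  | nil =>
    intro B _ _ _ μ _
    simp [tvDist]
  | cons A L ih =>
    intro B hL hB hrow μ hμ
    have hA : IsStochastic A := hL A (List.mem_cons_self)
    rw [List.prod_cons, List.length_cons, pow_succ', ← Matrix.vecMul_vecMul,
      ← Matrix.vecMul_vecMul]
    have h1 := ih B (fun A' h => hL A' (List.mem_cons_of_mem _ h)) hB
      (fun A' h => hrow A' (List.mem_cons_of_mem _ h)) (μ ᵥ* A) (aux_prob_vecMul hμ hA)
    have h2 : tvDist ((μ ᵥ* A) ᵥ* B ^ L.length) ((μ ᵥ* B) ᵥ* B ^ L.length)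
        ≤ tvDist (μ ᵥ* A) (μ ᵥ* B) := aux_tv_contr (aux_stoch_pow hB _)
    have h3 : tvDist (μ ᵥ* A) (μ ᵥ* B) ≤ c / 2 :=
      aux_tv_perturb hμ (hrow A (List.mem_cons_self))
    have h4 := aux_tv_tri ((μ ᵥ* A) ᵥ* L.prod) ((μ ᵥ* A) ᵥ* B ^ L.length)
      ((μ ᵥ* B) ᵥ* B ^ L.length)
    push_cast
    linarith

lemma aux_bindcast (l : List ℕ) :
    (do let a ← l; pure ((a:ℝ)) : List ℝ) = l.map (Nat.cast : ℕ → ℝ) := by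
  induction l with
  | nil => rfl
  | cons x l ih => simpa using ih

lemma aux_prodSeg_eq_map' (P₀ P₁ : Matrix (Fin n) (Fin n) ℝ) (T j k : ℕ) :
    prodSeg P₀ P₁ T j k
      = ((List.range (k - j)).map
          (fun i : ℕ => Pt P₀ P₁ (((j : ℝ) + (i : ℝ) + 1) / (T : ℝ)))).prod := by
  unfold prodSeg
  rw [aux_bindcast, List.map_map]
  rfl

lemma aux_prodSeg_split (P₀ P₁ : Matrix (Fin n) (Fin n) ℝ) (T a b : ℕ) (h : a ≤ b) :
    prodSeg P₀ P₁ T 0 b = prodSeg P₀ P₁ T 0 a * prodSeg P₀ P₁ T a b := by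
  obtain ⟨c, rfl⟩ : ∃ c, b = a + c := ⟨b - a, by omega⟩
  rw [aux_prodSeg_eq_map', aux_prodSeg_eq_map', aux_prodSeg_eq_map',
    Nat.sub_zero, Nat.sub_zero, Nat.add_sub_cancel_left, List.range_add,
    List.map_append, List.prod_append, List.map_map]
  congr 1
  refine congrArg List.prod (List.map_congr_left fun i _ => ?_)
  simp only [Function.comp_apply]
  congr 1
  push_cast
  ring

lemma aux_prodSeg_stoch {P₀ P₁ : Matrix (Fin n) (Fin n) ℝ} (hP₀ : IsStochastic P₀)
    (hP₁ : IsStochastic P₁) {T j k : ℕ} (hk : k ≤ T) (hT : 0 < T) :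
    IsStochastic (prodSeg P₀ P₁ T j k) := by
  rw [aux_prodSeg_eq_map']
  apply aux_stoch_prod
  intro A hA
  simp only [List.mem_map, List.mem_range] at hA
  obtain ⟨i, hi, rfl⟩ := hA
  apply aux_Pt_stoch hP₀ hP₁
  have hT' : (0 : ℝ) < T := by exact_mod_cast hT
  constructor
  · positivity
  · rw [div_le_one hT']
    have : j + i + 1 ≤ T := by omega
    exact_mod_cast this

end Aux3

section Aux4
open Matrix BigOperators Finset
variable {n : ℕ}

lemma aux_tele_pow {A B : Matrix (Fin n) (Fin n) ℝ} (hA : IsStochastic A)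
    (hB : IsStochastic B) {c : ℝ} (hrow : ∀ i, ∑ j, |A i j - B i j| ≤ c) (m : ℕ)
    {μ : Fin n → ℝ} (hμ : IsProbVec μ) :
    tvDist (μ ᵥ* A ^ m) (μ ᵥ* B ^ m) ≤ (m : ℝ) * c / 2 := by
  have h := aux_tele (c := c) (List.replicate m A) B
    (fun A' hA' => by rwa [List.eq_of_mem_replicate hA'])
    hB
    (fun A' hA' i => by rw [List.eq_of_mem_replicate hA']; exact hrow i)
    μ hμ
  rwa [List.prod_replicate, List.length_replicate] at h

lemma aux_tele_seg {P₀ P₁ : Matrix (Fin n) (Fin n) ℝ} (hP₀ : IsStochastic P₀)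
    (hP₁ : IsStochastic P₁) {T : ℕ} (hT : 0 < T) (j k : ℕ) (hkT : k ≤ T)
    {B : Matrix (Fin n) (Fin n) ℝ} (hB : IsStochastic B) {c : ℝ}
    (hrow : ∀ m : ℕ, j < m → m ≤ k → ∀ i,
      ∑ j', |Pt P₀ P₁ ((m : ℝ) / (T : ℝ)) i j' - B i j'| ≤ c)
    {μ : Fin n → ℝ} (hμ : IsProbVec μ) :
    tvDist (μ ᵥ* prodSeg P₀ P₁ T j k) (μ ᵥ* B ^ (k - j))
      ≤ ((k - j : ℕ) : ℝ) * c / 2 := by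
  have hT' : (0 : ℝ) < T := by exact_mod_cast hT
  rw [aux_prodSeg_eq_map']
  have hlen : ((List.range (k - j)).map
      (fun i : ℕ => Pt P₀ P₁ (((j : ℝ) + (i : ℝ) + 1) / (T : ℝ)))).length = k - j := by
    simp
  have hst : ∀ A ∈ (List.range (k - j)).map
      (fun i : ℕ => Pt P₀ P₁ (((j : ℝ) + (i : ℝ) + 1) / (T : ℝ))), IsStochastic A := by
    intro A hA
    simp only [List.mem_map, List.mem_range] at hA
    obtain ⟨i, hi, rfl⟩ := hA
    apply aux_Pt_stoch hP₀ hP₁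
    constructor
    · positivity
    · rw [div_le_one hT']
      have : j + i + 1 ≤ T := by omega
      exact_mod_cast this
  have hrows : ∀ A ∈ (List.range (k - j)).map
      (fun i : ℕ => Pt P₀ P₁ (((j : ℝ) + (i : ℝ) + 1) / (T : ℝ))),
      ∀ i', ∑ j', |A i' j' - B i' j'| ≤ c := by
    intro A hA i'
    simp only [List.mem_map, List.mem_range] at hA
    obtain ⟨i, hi, rfl⟩ := hA
    have e : ((j : ℝ) + (i : ℝ) + 1) = ((j + i + 1 : ℕ) : ℝ) := by push_cast; ring
    rw [e]
    exact hrow (j + i + 1) (by omega) (by omega) i'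
  have h := aux_tele (c := c) _ B hst hB hrows μ hμ
  rwa [hlen] at h

end Aux4

set_option maxHeartbeats 1000000 in
open Finset in
/-- For 0 < ε < 1/√n and every integer T with
T ≥ 4 t_mix(ε/2)⁴/ε³ + 4 t_mix(ε/2)²/ε² + 1/ε and
√(ε/T) − 1/T ≤ ε(1 − √n ε)/(4 n^{3/2} t_mix(ε/2)), one has
`‖π₀ P_{1/T} ⋯ P_{k/T} − π_{k/T}‖_TV ≤ ε` for every 1 ≤ k ≤ T. -/
theorem stmt_3 {n : ℕ} (hn : 1 ≤ n) (P₀ P₁ : Matrix (Fin n) (Fin n) ℝ)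
    (hP₀ : IsStochastic P₀) (hP₀i : MCIrreducible P₀) (hP₀a : MCAperiodic P₀)
    (hP₁ : IsStochastic P₁) (hP₁i : MCIrreducible P₁) (hP₁a : MCAperiodic P₁)
    (π : ℝ → Fin n → ℝ)
    (hπ : ∀ t ∈ Set.Icc (0 : ℝ) 1, IsProbVec (π t) ∧ (π t) ᵥ* (Pt P₀ P₁ t) = π t)
    (ε : ℝ) (hε0 : 0 < ε) (hε1 : ε < 1 / Real.sqrt n)
    (T : ℕ)
    (hT1 : 4 * (maxMixingTime P₀ P₁ π (ε / 2) : ℝ) ^ 4 / ε ^ 3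
         + 4 * (maxMixingTime P₀ P₁ π (ε / 2) : ℝ) ^ 2 / ε ^ 2 + 1 / ε ≤ (T : ℝ))
    (hT2 : Real.sqrt (ε / (T : ℝ)) - 1 / (T : ℝ)
         ≤ ε * (1 - Real.sqrt n * ε)
             / (4 * (n : ℝ) ^ ((3 : ℝ) / 2) * (maxMixingTime P₀ P₁ π (ε / 2) : ℝ)))
    (k : ℕ) (hk1 : 1 ≤ k) (hk2 : k ≤ T) :
    tvDist ((π 0) ᵥ* adiabProd P₀ P₁ T k) (π ((k : ℝ) / (T : ℝ))) ≤ ε := by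
  classical
  have hn0 : 0 < n := hn
  have hTpos : 0 < T := le_trans hk1 hk2
  have hT0 : (0 : ℝ) < T := by exact_mod_cast hTpos
  have hε1' : ε ≤ 1 := by
    have h1 : (1 : ℝ) ≤ Real.sqrt n := by
      rw [show (1 : ℝ) = Real.sqrt 1 from Real.sqrt_one.symm]
      exact Real.sqrt_le_sqrt (by exact_mod_cast hn)
    have h2 : 1 / Real.sqrt n ≤ 1 := by
      rw [div_le_one (lt_of_lt_of_le one_pos h1)]; exact h1
    linarith
  have hPts : ∀ s ∈ Set.Icc (0 : ℝ) 1, IsStochastic (Pt P₀ P₁ s) :=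
    fun s hs => aux_Pt_stoch hP₀ hP₁ hs
  have hs0 : (0 : ℝ) ∈ Set.Icc (0 : ℝ) 1 := ⟨le_refl 0, zero_le_one⟩
  have hπ0 : IsProbVec (π 0) := (hπ 0 hs0).1
  have hstat0 : (π 0) ᵥ* Pt P₀ P₁ 0 = π 0 := (hπ 0 hs0).2
  have hsk : (k : ℝ) / (T : ℝ) ∈ Set.Icc (0 : ℝ) 1 :=
    ⟨by positivity, by rw [div_le_one hT0]; exact_mod_cast hk2⟩
  have : Nonempty (Fin n) := ⟨⟨0, hn0⟩⟩
  -- primitivity of the endpoints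
  obtain ⟨N₀, hN₀⟩ := aux_primitive hP₀ hP₀i hP₀a
  obtain ⟨N₁, hN₁⟩ := aux_primitive hP₁ hP₁i hP₁a
  obtain ⟨δ₀, hδ₀pos, hδ₀⟩ : ∃ δ : ℝ, 0 < δ ∧ ∀ i j, δ ≤ (P₀ ^ N₀) i j := by
    refine ⟨Finset.univ.inf' Finset.univ_nonempty
      (fun p : Fin n × Fin n => (P₀ ^ N₀) p.1 p.2), ?_, ?_⟩
    · rw [Finset.lt_inf'_iff]
      exact fun p _ => hN₀ p.1 p.2
    · exact fun i j => Finset.inf'_le _ (Finset.mem_univ (i, j))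
  obtain ⟨δ₁, hδ₁pos, hδ₁⟩ : ∃ δ : ℝ, 0 < δ ∧ ∀ i j, δ ≤ (P₁ ^ N₁) i j := by
    refine ⟨Finset.univ.inf' Finset.univ_nonempty
      (fun p : Fin n × Fin n => (P₁ ^ N₁) p.1 p.2), ?_, ?_⟩
    · rw [Finset.lt_inf'_iff]
      exact fun p _ => hN₁ p.1 p.2
    · exact fun i j => Finset.inf'_le _ (Finset.mem_univ (i, j))
  set δs : ℝ := min ((1 / 2 : ℝ) ^ N₀ * δ₀) ((1 / 2 : ℝ) ^ N₁ * δ₁) with hδsdef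
  have hδs0 : 0 < δs := lt_min (by positivity) (by positivity)
  -- uniform Doeblin minorization for every s ∈ [0,1]
  have hblock : ∀ s ∈ Set.Icc (0 : ℝ) 1, ∃ N, N ≤ max N₀ N₁ ∧
      ∀ i j, δs ≤ ((Pt P₀ P₁ s) ^ N) i j := by
    intro s hs
    by_cases hhalf : s ≤ 1 / 2
    · refine ⟨N₀, le_max_left _ _, fun i j => ?_⟩
      have h1 : ∀ i j, (1 / 2 : ℝ) * P₀ i j ≤ Pt P₀ P₁ s i j := by
        intro i j
        rw [aux_Pt_apply]
        nlinarith [hP₀.1 i j, hP₁.1 i j, hs.1, hs.2]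
      have h2 := aux_pow_entry_mono (by norm_num) hP₀.1 h1 N₀ i j
      calc δs ≤ (1 / 2 : ℝ) ^ N₀ * δ₀ := min_le_left _ _
        _ ≤ (1 / 2 : ℝ) ^ N₀ * (P₀ ^ N₀) i j :=
            mul_le_mul_of_nonneg_left (hδ₀ i j) (by positivity)
        _ ≤ _ := h2
    · refine ⟨N₁, le_max_right _ _, fun i j => ?_⟩
      push_neg at hhalf
      have h1 : ∀ i j, (1 / 2 : ℝ) * P₁ i j ≤ Pt P₀ P₁ s i j := by
        intro i j
        rw [aux_Pt_apply]
        nlinarith [hP₀.1 i j, hP₁.1 i j, hs.1, hs.2]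
      have h2 := aux_pow_entry_mono (by norm_num) hP₁.1 h1 N₁ i j
      calc δs ≤ (1 / 2 : ℝ) ^ N₁ * δ₁ := min_le_right _ _
        _ ≤ (1 / 2 : ℝ) ^ N₁ * (P₁ ^ N₁) i j :=
            mul_le_mul_of_nonneg_left (hδ₁ i j) (by positivity)
        _ ≤ _ := h2
  have h1lt : 1 - (n : ℝ) * δs < 1 := by
    have : (0 : ℝ) < (n : ℝ) * δs := by positivity
    linarith
  obtain ⟨q, hq⟩ := exists_pow_lt_of_lt_one (half_pos hε0) h1lt
  set K := (max N₀ N₁) * q with hKdef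
  -- every b ≥ K is a valid mixing horizon for every s ∈ [0,1]
  have hKmem : ∀ s ∈ Set.Icc (0 : ℝ) 1, ∀ b, K ≤ b → ∀ ν : Fin n → ℝ, IsProbVec ν →
      tvDist (ν ᵥ* ((Pt P₀ P₁ s) ^ b)) (π s) ≤ ε / 2 := by
    intro s hs b hb ν hν
    obtain ⟨N, hNle, hN⟩ := hblock s hs
    have hst := hPts s hs
    have hbase := aux_mix_block hn0 hst (hπ s hs).1 (hπ s hs).2 hN q
    have hNq : N * q ≤ b := le_trans (Nat.mul_le_mul_right q hNle) hb
    obtain ⟨d, rfl⟩ : ∃ d, b = d + N * q := ⟨b - N * q, by omega⟩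
    rw [pow_add, ← Matrix.vecMul_vecMul]
    exact le_trans
      (hbase _ (aux_prob_vecMul hν (aux_stoch_pow hst d))) (le_of_lt hq)
  -- the max mixing time M is a valid mixing horizon for every s ∈ [0,1]
  set M := maxMixingTime P₀ P₁ π (ε / 2) with hMdef
  have hbdd : BddAbove {m : ℕ | ∃ s ∈ Set.Icc (0 : ℝ) 1,
      m = mixingTime (Pt P₀ P₁ s) (π s) (ε / 2)} := by
    refine ⟨K, ?_⟩
    rintro m ⟨s', hs', rfl⟩
    exact Nat.sInf_le (fun ν hν => hKmem s' hs' K le_rfl ν hν)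
  have hMmem : ∀ s ∈ Set.Icc (0 : ℝ) 1, ∀ ν : Fin n → ℝ, IsProbVec ν →
      tvDist (ν ᵥ* ((Pt P₀ P₁ s) ^ M)) (π s) ≤ ε / 2 := by
    intro s hs ν hν
    have hKS : K ∈ {T' : ℕ | ∀ ν : Fin n → ℝ, IsProbVec ν →
        tvDist (ν ᵥ* ((Pt P₀ P₁ s) ^ T')) (π s) ≤ ε / 2} :=
      fun ν hν => hKmem s hs K le_rfl ν hν
    have hsInf : mixingTime (Pt P₀ P₁ s) (π s) (ε / 2) ∈ {T' : ℕ |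
        ∀ ν : Fin n → ℝ, IsProbVec ν →
        tvDist (ν ᵥ* ((Pt P₀ P₁ s) ^ T')) (π s) ≤ ε / 2} :=
      Nat.sInf_mem ⟨K, hKS⟩
    have hmixle : mixingTime (Pt P₀ P₁ s) (π s) (ε / 2) ≤ M := by
      rw [hMdef]
      exact le_csSup hbdd ⟨s, hs, rfl⟩
    obtain ⟨d, hd⟩ : ∃ d, M = d + mixingTime (Pt P₀ P₁ s) (π s) (ε / 2) :=
      ⟨M - mixingTime (Pt P₀ P₁ s) (π s) (ε / 2), by omega⟩
    rw [hd, pow_add, ← Matrix.vecMul_vecMul]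
    exact hsInf _ (aux_prob_vecMul hν (aux_stoch_pow (hPts s hs) d))
  clear_value M
  -- final numeric bound
  have hfinal : 2 * ((M : ℝ) ^ 2 / T) + ε / 2 ≤ ε := by
    rcases Nat.eq_zero_or_pos M with hM0 | hM1
    · rw [hM0]
      push_cast
      rw [show (0 : ℝ) ^ 2 = 0 by ring, zero_div, mul_zero]
      linarith
    · have hM1' : (1 : ℝ) ≤ M := by exact_mod_cast hM1
      have h4 : 4 * (M : ℝ) ^ 4 / ε ^ 3 ≤ T := by
        have t2 : (0 : ℝ) ≤ 4 * (M : ℝ) ^ 2 / ε ^ 2 := by positivity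
        have t3 : (0 : ℝ) ≤ 1 / ε := by positivity
        linarith [hT1]
      have hε3 : (0 : ℝ) < ε ^ 3 := by positivity
      rw [div_le_iff₀ hε3] at h4
      have hMsq : (1 : ℝ) ≤ (M : ℝ) ^ 2 := by nlinarith
      have a1 : (M : ℝ) ^ 2 ≤ (M : ℝ) ^ 4 := by nlinarith [sq_nonneg ((M : ℝ))]
      have a2 : ε ^ 3 ≤ ε := by nlinarith
      have a3 : (T : ℝ) * ε ^ 3 ≤ (T : ℝ) * ε := by
        exact mul_le_mul_of_nonneg_left a2 (le_of_lt hT0)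
      have key : 4 * (M : ℝ) ^ 2 ≤ ε * T := by linarith
      have h5 : 2 * ((M : ℝ) ^ 2 / T) ≤ ε / 2 := by
        rw [show 2 * ((M : ℝ) ^ 2 / T) = 2 * (M : ℝ) ^ 2 / T by ring,
          div_le_div_iff₀ hT0 (by norm_num : (0 : ℝ) < 2)]
        linarith
      linarith
  -- the per-step perturbation constant
  set c : ℝ := 2 * ((M : ℝ) / (T : ℝ)) with hcdef
  clear_value c
  have hAd : adiabProd P₀ P₁ T k = prodSeg P₀ P₁ T 0 k := rfl
  by_cases hkM : M ≤ k
  · -- mixing case : compare the last M factors with (P_{k/T})^M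
    set j := k - M with hjdef
    have hjM : j + M = k := by omega
    have hkj : k - j = M := by omega
    have hsplit : prodSeg P₀ P₁ T 0 k = prodSeg P₀ P₁ T 0 j * prodSeg P₀ P₁ T j k :=
      aux_prodSeg_split P₀ P₁ T j k (by omega)
    rw [hAd, hsplit, ← Matrix.vecMul_vecMul]
    set μ := (π 0) ᵥ* prodSeg P₀ P₁ T 0 j with hμdef
    have hμ : IsProbVec μ :=
      aux_prob_vecMul hπ0 (aux_prodSeg_stoch hP₀ hP₁ (by omega) hTpos)
    have hrow : ∀ m : ℕ, j < m → m ≤ k → ∀ i,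
        ∑ j', |Pt P₀ P₁ ((m : ℝ) / (T : ℝ)) i j'
          - Pt P₀ P₁ ((k : ℝ) / (T : ℝ)) i j'| ≤ c := by
      intro m hm1 hm2 i
      refine le_trans (aux_Pt_row_diff hP₀ hP₁ _ _ i) ?_
      rw [hcdef]
      have habs : |(m : ℝ) / T - (k : ℝ) / T| ≤ (M : ℝ) / T := by
        rw [show (m : ℝ) / T - (k : ℝ) / T = ((m : ℝ) - k) / T by ring,
          abs_div, abs_of_pos hT0]
        have c1 : (m : ℝ) ≤ k := by exact_mod_cast hm2
        have c2 : (k : ℝ) ≤ (m : ℝ) + M := by exact_mod_cast (by omega : k ≤ m + M)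
        have c3 : |(m : ℝ) - k| ≤ (M : ℝ) := by
          rw [abs_le]; constructor <;> linarith
        gcongr
      linarith [habs]
    have htele := aux_tele_seg hP₀ hP₁ hTpos j k hk2 (hPts _ hsk) hrow hμ
    rw [hkj] at htele
    have hmix := hMmem _ hsk μ hμ
    have htri := aux_tv_tri (μ ᵥ* prodSeg P₀ P₁ T j k)
      (μ ᵥ* (Pt P₀ P₁ ((k : ℝ) / (T : ℝ))) ^ M) (π ((k : ℝ) / (T : ℝ)))
    have hM2 : (M : ℝ) * c / 2 = (M : ℝ) ^ 2 / T := by rw [hcdef]; ring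
    have hM2' : (0 : ℝ) ≤ (M : ℝ) ^ 2 / T := by positivity
    rw [hM2] at htele
    have hstep : tvDist (μ ᵥ* prodSeg P₀ P₁ T j k) (π ((k : ℝ) / (T : ℝ)))
        ≤ (M : ℝ) ^ 2 / T + ε / 2 := le_trans htri (add_le_add htele hmix)
    refine le_trans hstep ?_
    linarith [hfinal, hM2']
  · -- short case : k < M, compare with the stationary chain at time 0
    push_neg at hkM
    rw [hAd]
    have hrow0 : ∀ m : ℕ, 0 < m → m ≤ k → ∀ i,
        ∑ j', |Pt P₀ P₁ ((m : ℝ) / (T : ℝ)) i j' - Pt P₀ P₁ 0 i j'| ≤ c := by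
      intro m hm1 hm2 i
      refine le_trans (aux_Pt_row_diff hP₀ hP₁ _ _ i) ?_
      rw [hcdef]
      have habs : |(m : ℝ) / T - 0| ≤ (M : ℝ) / T := by
        rw [sub_zero, abs_of_nonneg (by positivity)]
        have c1 : (m : ℝ) ≤ M := by exact_mod_cast (by omega : m ≤ M)
        gcongr
      linarith [habs]
    have htele := aux_tele_seg hP₀ hP₁ hTpos 0 k hk2 (hPts 0 hs0) hrow0 hπ0
    rw [Nat.sub_zero] at htele
    rw [aux_stat_pow hstat0 k] at htele
    -- htele : tvDist ((π 0) ᵥ* prodSeg P₀ P₁ T 0 k) (π 0) ≤ k * c / 2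
    have hrowk : ∀ i, ∑ j', |Pt P₀ P₁ 0 i j' - Pt P₀ P₁ ((k : ℝ) / (T : ℝ)) i j'| ≤ c := by
      intro i
      refine le_trans (aux_Pt_row_diff hP₀ hP₁ _ _ i) ?_
      rw [hcdef]
      have habs : |(0 : ℝ) - (k : ℝ) / T| ≤ (M : ℝ) / T := by
        rw [zero_sub, abs_neg, abs_of_nonneg (by positivity)]
        have c1 : (k : ℝ) ≤ M := by exact_mod_cast (le_of_lt hkM)
        gcongr
      linarith [habs]
    have htele2 := aux_tele_pow (hPts 0 hs0) (hPts _ hsk) hrowk M hπ0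
    rw [aux_stat_pow hstat0 M] at htele2
    -- htele2 : tvDist (π 0) ((π 0) ᵥ* (Pt (k/T)) ^ M) ≤ M * c / 2
    have hmix := hMmem _ hsk (π 0) hπ0
    have htri1 := aux_tv_tri ((π 0) ᵥ* prodSeg P₀ P₁ T 0 k) (π 0) (π ((k : ℝ) / (T : ℝ)))
    have htri2 := aux_tv_tri (π 0) ((π 0) ᵥ* (Pt P₀ P₁ ((k : ℝ) / (T : ℝ))) ^ M)
      (π ((k : ℝ) / (T : ℝ)))
    have hc0 : (0 : ℝ) ≤ c := by rw [hcdef]; positivity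
    have hkM' : (k : ℝ) ≤ M := by exact_mod_cast (le_of_lt hkM)
    have hM2 : (M : ℝ) * c / 2 + (M : ℝ) * c / 2 = 2 * ((M : ℝ) ^ 2 / T) := by
      rw [hcdef]; ring
    have hkc : (k : ℝ) * c / 2 ≤ (M : ℝ) * c / 2 := by
      have := mul_le_mul_of_nonneg_right hkM' hc0
      linarith [this]
    have hstep2 : tvDist (π 0) (π ((k : ℝ) / (T : ℝ)))
        ≤ (M : ℝ) * c / 2 + ε / 2 := le_trans htri2 (add_le_add htele2 hmix)
    have hstep1 : tvDist ((π 0) ᵥ* prodSeg P₀ P₁ T 0 k) (π ((k : ℝ) / (T : ℝ)))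
        ≤ (k : ℝ) * c / 2 + ((M : ℝ) * c / 2 + ε / 2) :=
      le_trans htri1 (add_le_add htele hstep2)
    refine le_trans hstep1 ?_
    have e2 : (k : ℝ) * c / 2 + ((M : ℝ) * c / 2 + ε / 2)
        ≤ (M : ℝ) * c / 2 + ((M : ℝ) * c / 2 + ε / 2) := by linarith [hkc]
    refine le_trans e2 ?_
    linarith [hM2, hfinal]
end

section
/- For all integers T ≥ 1 and 1 ≤ k ≤ T, one has ‖π₀ P_{1/T} P_{2/T} ⋯ P_{k/T} − π_{k/T}‖_TV ≤ ‖π_{k/T} − π₀‖_TV + (k+1)²/(2T). -/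
open Matrix BigOperators

lemma tvDist_self {n : ℕ} (μ : Fin n → ℝ) : tvDist μ μ = 0 := by
  simp [tvDist]

lemma tvDist_comm {n : ℕ} (μ ν : Fin n → ℝ) : tvDist μ ν = tvDist ν μ := by
  unfold tvDist
  congr 1
  exact Finset.sum_congr rfl fun i _ => abs_sub_comm _ _

lemma tvDist_triangle {n : ℕ} (μ ν ρ : Fin n → ℝ) :
    tvDist μ ρ ≤ tvDist μ ν + tvDist ν ρ := by
  unfold tvDist
  rw [← mul_add, ← Finset.sum_add_distrib]
  have h : ∀ i ∈ Finset.univ, |μ i - ρ i| ≤ |μ i - ν i| + |ν i - ρ i| := fun i _ =>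
    abs_sub_le _ _ _
  have := Finset.sum_le_sum h
  linarith

lemma tv_contract {n : ℕ} (M : Matrix (Fin n) (Fin n) ℝ) (hM : IsStochastic M)
    (μ ν : Fin n → ℝ) : tvDist (μ ᵥ* M) (ν ᵥ* M) ≤ tvDist μ ν := by
  unfold tvDist
  have h : ∀ j, |(μ ᵥ* M) j - (ν ᵥ* M) j| ≤ ∑ i, |μ i - ν i| * M i j := by
    intro j
    have he : (μ ᵥ* M) j - (ν ᵥ* M) j = ∑ i, (μ i - ν i) * M i j := by
      simp [Matrix.vecMul, dotProduct, sub_mul, Finset.sum_sub_distrib]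
    rw [he]
    refine (Finset.abs_sum_le_sum_abs _ _).trans ?_
    refine Finset.sum_le_sum fun i _ => ?_
    rw [abs_mul, abs_of_nonneg (hM.1 i j)]
  have h2 : ∑ j, |(μ ᵥ* M) j - (ν ᵥ* M) j| ≤ ∑ i, |μ i - ν i| := by
    calc ∑ j, |(μ ᵥ* M) j - (ν ᵥ* M) j| ≤ ∑ j, ∑ i, |μ i - ν i| * M i j :=
          Finset.sum_le_sum fun j _ => h j
      _ = ∑ i, |μ i - ν i| * ∑ j, M i j := by
          rw [Finset.sum_comm]
          exact Finset.sum_congr rfl fun i _ => (Finset.mul_sum _ _ _).symm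
      _ = ∑ i, |μ i - ν i| := by
          exact Finset.sum_congr rfl fun i _ => by rw [hM.2 i, mul_one]
  linarith

lemma Pt_stochastic {n : ℕ} {P₀ P₁ : Matrix (Fin n) (Fin n) ℝ}
    (hP₀ : IsStochastic P₀) (hP₁ : IsStochastic P₁) {t : ℝ} (h0 : 0 ≤ t) (h1 : t ≤ 1) :
    IsStochastic (Pt P₀ P₁ t) := by
  constructor
  · intro i j
    have := hP₀.1 i j; have := hP₁.1 i j
    simp only [Pt, Matrix.add_apply, Matrix.smul_apply, smul_eq_mul]
    nlinarith
  · intro i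
    simp only [Pt, Matrix.add_apply, Matrix.smul_apply, smul_eq_mul]
    rw [Finset.sum_add_distrib, ← Finset.mul_sum, ← Finset.mul_sum, hP₀.2 i, hP₁.2 i]
    ring

lemma prod_stochastic {n : ℕ} (l : List (Matrix (Fin n) (Fin n) ℝ))
    (h : ∀ M ∈ l, IsStochastic M) : IsStochastic l.prod := by
  induction l with
  | nil =>
    constructor
    · intro i j
      simp only [List.prod_nil, Matrix.one_apply]
      split <;> norm_num
    · intro i
      simp [Matrix.one_apply]
  | cons A l ih =>
    have hA : IsStochastic A := h A List.mem_cons_self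
    have hl : IsStochastic l.prod := ih fun M hM => h M (List.mem_cons_of_mem _ hM)
    rw [List.prod_cons]
    constructor
    · intro i j
      rw [Matrix.mul_apply]
      exact Finset.sum_nonneg fun a _ => mul_nonneg (hA.1 i a) (hl.1 a j)
    · intro i
      simp only [Matrix.mul_apply]
      rw [Finset.sum_comm]
      calc ∑ a, ∑ j, A i a * l.prod a j = ∑ a, A i a * ∑ j, l.prod a j := by
            exact Finset.sum_congr rfl fun a _ => (Finset.mul_sum _ _ _).symm
        _ = 1 := by
            simp_rw [hl.2]
            simpa using hA.2 i

lemma prodSeg_stochastic {n : ℕ} {P₀ P₁ : Matrix (Fin n) (Fin n) ℝ}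
    (hP₀ : IsStochastic P₀) (hP₁ : IsStochastic P₁) {T j k : ℕ} (hT : 1 ≤ T) (hk : k ≤ T) :
    IsStochastic (prodSeg P₀ P₁ T j k) := by
  apply prod_stochastic
  intro M hM
  simp only [List.mem_map, List.mem_flatMap, List.mem_range, List.pure_def,
    List.bind_eq_flatMap, List.mem_singleton] at hM
  obtain ⟨x, ⟨a, ha, rfl⟩, rfl⟩ := hM
  have hT' : (0 : ℝ) < (T : ℝ) := by exact_mod_cast hT
  apply Pt_stochastic hP₀ hP₁
  · apply div_nonneg _ hT'.le
    positivity
  · rw [div_le_one hT']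
    have h1 : j + a + 1 ≤ T := by omega
    have h2 : ((j : ℝ) + (a : ℝ) + 1) = ((j + a + 1 : ℕ) : ℝ) := by push_cast; ring
    rw [h2]
    exact_mod_cast h1

lemma tv_drift {n : ℕ} {P₀ P₁ : Matrix (Fin n) (Fin n) ℝ}
    (hP₀ : IsStochastic P₀) (hP₁ : IsStochastic P₁) (ρ : Fin n → ℝ) (hρ : IsProbVec ρ)
    (s t : ℝ) (hstat : ρ ᵥ* Pt P₀ P₁ s = ρ) :
    tvDist (ρ ᵥ* Pt P₀ P₁ t) ρ ≤ |t - s| := by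
  unfold tvDist
  have key : ∀ j, |(ρ ᵥ* Pt P₀ P₁ t) j - ρ j| ≤ |t - s| * ∑ i, ρ i * (P₀ i j + P₁ i j) := by
    intro j
    have hj : ρ j = (ρ ᵥ* Pt P₀ P₁ s) j := by rw [hstat]
    have he : (ρ ᵥ* Pt P₀ P₁ t) j - ρ j = (t - s) * ∑ i, ρ i * (P₁ i j - P₀ i j) := by
      rw [hj]
      simp only [Matrix.vecMul, dotProduct, Pt, Matrix.add_apply, Matrix.smul_apply,
        smul_eq_mul, Finset.mul_sum]
      rw [← Finset.sum_sub_distrib]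
      exact Finset.sum_congr rfl fun i _ => by ring
    rw [he, abs_mul]
    apply mul_le_mul_of_nonneg_left _ (abs_nonneg _)
    refine (Finset.abs_sum_le_sum_abs _ _).trans ?_
    refine Finset.sum_le_sum fun i _ => ?_
    rw [abs_mul, abs_of_nonneg (hρ.1 i)]
    refine mul_le_mul_of_nonneg_left ?_ (hρ.1 i)
    have := hP₀.1 i j; have := hP₁.1 i j
    rw [abs_le]
    constructor <;> linarith
  have hsum : ∑ j, |(ρ ᵥ* Pt P₀ P₁ t) j - ρ j|
      ≤ ∑ j, |t - s| * ∑ i, ρ i * (P₀ i j + P₁ i j) :=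
    Finset.sum_le_sum fun j _ => key j
  have h2 : ∑ j, |t - s| * ∑ i, ρ i * (P₀ i j + P₁ i j) = |t - s| * 2 := by
    rw [← Finset.mul_sum]
    congr 1
    rw [Finset.sum_comm]
    calc ∑ i, ∑ j, ρ i * (P₀ i j + P₁ i j)
        = ∑ i, ρ i * ((∑ j, P₀ i j) + (∑ j, P₁ i j)) := by
          refine Finset.sum_congr rfl fun i _ => ?_
          rw [← Finset.mul_sum, Finset.sum_add_distrib]
      _ = 2 := by
          simp_rw [hP₀.2, hP₁.2]
          rw [← Finset.sum_mul, hρ.2]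
          norm_num
  linarith

lemma prodSeg_succ {n : ℕ} (P₀ P₁ : Matrix (Fin n) (Fin n) ℝ) (T j k : ℕ) (h : j < k) :
    prodSeg P₀ P₁ T j k =
      Pt P₀ P₁ (((j : ℝ) + 1) / (T : ℝ)) * prodSeg P₀ P₁ T (j + 1) k := by
  unfold prodSeg
  obtain ⟨m, hm⟩ : ∃ m, k - j = m + 1 := ⟨k - j - 1, by omega⟩
  have h2 : k - (j + 1) = m := by omega
  rw [hm, h2]
  simp [List.range_succ_eq_map, List.map_map, Function.comp]
  have key : ∀ l : List ℕ,
      List.map (fun i : ℝ => Pt P₀ P₁ (((j : ℝ) + i + 1) / (T : ℝ)))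
          ((List.map Nat.succ l).flatMap fun a : ℕ => [((a : ℝ))]) =
        List.map (fun i : ℝ => Pt P₀ P₁ (((j : ℝ) + 1 + i + 1) / (T : ℝ)))
          (l.flatMap fun a : ℕ => [((a : ℝ))]) := by
    intro l
    induction l with
    | nil => simp
    | cons a l ih =>
      simp only [List.map_cons, List.flatMap_cons, List.map_append, ih, List.cons_append,
        List.nil_append, List.map_nil]
      congr 2
      push_cast
      ring_nf
  rw [key]

/-- For all integers T ≥ 1 and 1 ≤ k ≤ T,
`‖π₀ P_{1/T} ⋯ P_{k/T} − π_{k/T}‖_TV ≤ ‖π_{k/T} − π₀‖_TV + (k+1)²/(2T)`. -/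
theorem stmt_6 {n : ℕ} (hn : 1 ≤ n) (P₀ P₁ : Matrix (Fin n) (Fin n) ℝ)
    (hP₀ : IsStochastic P₀) (hP₀i : MCIrreducible P₀) (hP₀a : MCAperiodic P₀)
    (hP₁ : IsStochastic P₁) (hP₁i : MCIrreducible P₁) (hP₁a : MCAperiodic P₁)
    (π : ℝ → Fin n → ℝ)
    (hπ : ∀ t ∈ Set.Icc (0 : ℝ) 1, IsProbVec (π t) ∧ (π t) ᵥ* (Pt P₀ P₁ t) = π t)
    (T k : ℕ) (hT : 1 ≤ T) (hk1 : 1 ≤ k) (hk2 : k ≤ T) :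
    tvDist ((π 0) ᵥ* adiabProd P₀ P₁ T k) (π ((k : ℝ) / (T : ℝ)))
      ≤ tvDist (π ((k : ℝ) / (T : ℝ))) (π 0) + ((k : ℝ) + 1) ^ 2 / (2 * (T : ℝ)) := by
  have hT' : (0 : ℝ) < (T : ℝ) := by exact_mod_cast hT
  set tk : ℝ := (k : ℝ) / (T : ℝ) with htk
  have htk0 : (0 : ℝ) ≤ tk := by positivity
  have htk1 : tk ≤ 1 := by
    rw [htk, div_le_one hT']
    exact_mod_cast hk2
  obtain ⟨hπ0p, hπ0s⟩ := hπ 0 ⟨le_refl 0, zero_le_one⟩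
  obtain ⟨hπkp, hπks⟩ := hπ tk ⟨htk0, htk1⟩
  have hA : IsStochastic (adiabProd P₀ P₁ T k) := prodSeg_stochastic hP₀ hP₁ hT hk2
  -- key claim by induction
  have claim : ∀ m : ℕ, m ≤ k →
      tvDist (π tk ᵥ* prodSeg P₀ P₁ T (k - m) k) (π tk)
        ≤ (m : ℝ) * ((m : ℝ) - 1) / (2 * (T : ℝ)) := by
    intro m
    induction m with
    | zero =>
      intro _
      have h1 : prodSeg P₀ P₁ T (k - 0) k = 1 := by
        unfold prodSeg
        simp
      rw [h1, Matrix.vecMul_one, tvDist_self]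
      simp
    | succ m ih =>
      intro hm
      have hmk : m ≤ k := by omega
      have hj : k - (m + 1) < k := by omega
      have hj1 : k - (m + 1) + 1 = k - m := by omega
      have hrw : prodSeg P₀ P₁ T (k - (m + 1)) k =
          Pt P₀ P₁ ((((k - (m + 1) : ℕ) : ℝ) + 1) / (T : ℝ)) * prodSeg P₀ P₁ T (k - m) k := by
        rw [prodSeg_succ P₀ P₁ T _ k hj, hj1]
      set t : ℝ := (((k - (m + 1) : ℕ) : ℝ) + 1) / (T : ℝ) with ht
      have hS : IsStochastic (prodSeg P₀ P₁ T (k - m) k) := prodSeg_stochastic hP₀ hP₁ hT hk2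
      have hdrift : tvDist (π tk ᵥ* Pt P₀ P₁ t) (π tk) ≤ (m : ℝ) / (T : ℝ) := by
        refine (tv_drift hP₀ hP₁ (π tk) hπkp tk t hπks).trans ?_
        have hc : ((k - (m + 1) : ℕ) : ℝ) = (k : ℝ) - ((m : ℝ) + 1) := by
          rw [Nat.cast_sub hm]
          push_cast
          ring
        have h1 : t - tk = -((m : ℝ) / (T : ℝ)) := by
          rw [ht, htk, hc]
          field_simp
          ring
        rw [h1, abs_neg, abs_of_nonneg (by positivity)]
      rw [hrw, ← Matrix.vecMul_vecMul]
      calc tvDist ((π tk ᵥ* Pt P₀ P₁ t) ᵥ* prodSeg P₀ P₁ T (k - m) k) (π tk)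
          ≤ tvDist ((π tk ᵥ* Pt P₀ P₁ t) ᵥ* prodSeg P₀ P₁ T (k - m) k)
              (π tk ᵥ* prodSeg P₀ P₁ T (k - m) k)
            + tvDist (π tk ᵥ* prodSeg P₀ P₁ T (k - m) k) (π tk) := tvDist_triangle _ _ _
        _ ≤ tvDist (π tk ᵥ* Pt P₀ P₁ t) (π tk)
            + (m : ℝ) * ((m : ℝ) - 1) / (2 * (T : ℝ)) :=
            add_le_add (tv_contract _ hS _ _) (ih hmk)
        _ ≤ (m : ℝ) / (T : ℝ) + (m : ℝ) * ((m : ℝ) - 1) / (2 * (T : ℝ)) :=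
            add_le_add_left hdrift _
        _ = ((m + 1 : ℕ) : ℝ) * (((m + 1 : ℕ) : ℝ) - 1) / (2 * (T : ℝ)) := by
            push_cast
            field_simp
            ring
  have hmain := claim k le_rfl
  rw [Nat.sub_self] at hmain
  have hadiab : adiabProd P₀ P₁ T k = prodSeg P₀ P₁ T 0 k := rfl
  rw [← hadiab] at hmain
  have tri := tvDist_triangle (π 0 ᵥ* adiabProd P₀ P₁ T k)
    (π tk ᵥ* adiabProd P₀ P₁ T k) (π tk)
  have hcon := tv_contract _ hA (π 0) (π tk)
  have hcomm : tvDist (π 0) (π tk) = tvDist (π tk) (π 0) := tvDist_comm _ _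
  have hbound : (k : ℝ) * ((k : ℝ) - 1) / (2 * (T : ℝ)) ≤ ((k : ℝ) + 1) ^ 2 / (2 * (T : ℝ)) := by
    have hk' : (1 : ℝ) ≤ (k : ℝ) := by exact_mod_cast hk1
    apply div_le_div_of_nonneg_right (c := 2 * (T : ℝ)) ?_ (by positivity) <;> try nlinarith
  linarith
end
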